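/- If X and Y are graphs on n vertices with n ≥ 2, at least one edge in X, and 2·Δ(X)·Δ(Y) < n, then the friends-and-strangers graph FS(X,Y) is disconnected. -/

import Mathlib

/-- The friends-and-strangers graph `FS X Y`: vertices are bijections
`V(X) ≃ V(Y)`; two bijections are adjacent iff they differ precisely on two
`X`-adjacent vertices, with the swapped values adjacent in `Y`. -/
def FS {V W : Type*} (X : SimpleGraph V) (Y : SimpleGraph W) : SimpleGraph (V ≃ W) where
  Adj σ σ' := ∃ a b : V, X.Adj a b ∧ Y.Adj (σ a) (σ b) ∧ σ' a = σ b ∧ σ' b = σ a ∧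
    ∀ c : V, c ≠ a → c ≠ b → σ' c = σ c
  symm := by
    constructor
    rintro σ σ' ⟨a, b, hX, hY, h1, h2, h3⟩
    refine ⟨a, b, hX, ?_, h2.symm, h1.symm, fun c hca hcb => (h3 c hca hcb).symm⟩
    rw [h1, h2]; exact hY.symm
  loopless := by
    constructor
    rintro σ ⟨a, b, hX, _, h1, _⟩
    exact hX.ne (σ.injective h1)

/-- `u` and `v` are `(X,Y)`-exchangeable from `σ` if `σ` and `τ_{uv} ∘ σ`
lie in the same connected component of `FS X Y`. -/
def Exchangeable {V W : Type*} [DecidableEq W] (X : SimpleGraph V) (Y : SimpleGraph W)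
    (u v : W) (σ : V ≃ W) : Prop :=
  (FS X Y).Reachable σ (σ.trans (Equiv.swap u v))

open Finset in
lemma exists_packing {V W : Type*} [Fintype V] [Fintype W]
    (n : ℕ) (hV : Fintype.card V = n) (hW : Fintype.card W = n)
    (X : SimpleGraph V) (Y : SimpleGraph W)
    [DecidableRel X.Adj] [DecidableRel Y.Adj]
    (h : 2 * X.maxDegree * Y.maxDegree < n) :
    ∃ σ : V ≃ W, ∀ a b : V, X.Adj a b → ¬ Y.Adj (σ a) (σ b) := by
  classical
  have hne : Nonempty (V ≃ W) := Fintype.card_eq.mp (hV.trans hW.symm)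
  set P : (V ≃ W) → Finset (V × V) :=
    fun σ => univ.filter (fun p : V × V => X.Adj p.1 p.2 ∧ Y.Adj (σ p.1) (σ p.2)) with hP
  obtain ⟨σ, hσ⟩ := Finite.exists_min (fun σ => (P σ).card)
  refine ⟨σ, fun u v hXuv hYuv => ?_⟩
  -- blocked sets
  set B1 : Finset V := univ.filter (fun w => ∃ x, X.Adj u x ∧ Y.Adj (σ x) (σ w)) with hB1
  set B2 : Finset V := univ.filter (fun w => ∃ x, X.Adj w x ∧ Y.Adj (σ u) (σ x)) with hB2
  have huB1 : u ∈ B1 := by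
    simp only [hB1, mem_filter, mem_univ, true_and]
    exact ⟨v, hXuv, hYuv.symm⟩
  have huB2 : u ∈ B2 := by
    simp only [hB2, mem_filter, mem_univ, true_and]
    exact ⟨v, hXuv, hYuv⟩
  have hB1card : B1.card ≤ X.maxDegree * Y.maxDegree := by
    have hsub : B1 ⊆ (X.neighborFinset u).biUnion
        (fun x => (Y.neighborFinset (σ x)).image σ.symm) := by
      intro w hw
      simp only [hB1, mem_filter, mem_univ, true_and] at hw
      obtain ⟨x, hx1, hx2⟩ := hw
      refine mem_biUnion.mpr ⟨x, ?_, ?_⟩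
      · rwa [SimpleGraph.mem_neighborFinset]
      · refine mem_image.mpr ⟨σ w, ?_, σ.symm_apply_apply w⟩
        rwa [SimpleGraph.mem_neighborFinset]
    calc B1.card ≤ _ := card_le_card hsub
      _ ≤ ∑ x ∈ X.neighborFinset u, ((Y.neighborFinset (σ x)).image σ.symm).card :=
          card_biUnion_le
      _ ≤ (X.neighborFinset u).card * Y.maxDegree := by
          refine sum_le_card_nsmul _ _ _ (fun x _ => ?_)
          rw [card_image_of_injective _ σ.symm.injective,
            SimpleGraph.card_neighborFinset_eq_degree]
          exact Y.degree_le_maxDegree _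
      _ ≤ X.maxDegree * Y.maxDegree := by
          have := X.degree_le_maxDegree u
          rw [SimpleGraph.card_neighborFinset_eq_degree]
          exact Nat.mul_le_mul_right _ this
  have hB2card : B2.card ≤ X.maxDegree * Y.maxDegree := by
    have hsub : B2 ⊆ ((Y.neighborFinset (σ u)).image σ.symm).biUnion
        (fun x => X.neighborFinset x) := by
      intro w hw
      simp only [hB2, mem_filter, mem_univ, true_and] at hw
      obtain ⟨x, hx1, hx2⟩ := hw
      refine mem_biUnion.mpr ⟨x, ?_, ?_⟩
      · refine mem_image.mpr ⟨σ x, ?_, σ.symm_apply_apply x⟩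
        rwa [SimpleGraph.mem_neighborFinset]
      · rw [SimpleGraph.mem_neighborFinset]; exact hx1.symm
    calc B2.card ≤ _ := card_le_card hsub
      _ ≤ ∑ x ∈ (Y.neighborFinset (σ u)).image σ.symm, (X.neighborFinset x).card :=
          card_biUnion_le
      _ ≤ ((Y.neighborFinset (σ u)).image σ.symm).card * X.maxDegree := by
          refine sum_le_card_nsmul _ _ _ (fun x _ => ?_)
          rw [SimpleGraph.card_neighborFinset_eq_degree]
          exact X.degree_le_maxDegree _
      _ ≤ X.maxDegree * Y.maxDegree := by
          rw [card_image_of_injective _ σ.symm.injective,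
            SimpleGraph.card_neighborFinset_eq_degree, Nat.mul_comm]
          exact Nat.mul_le_mul le_rfl (Y.degree_le_maxDegree _)
  -- find an unblocked w
  have hcard : (B1 ∪ B2 ∪ {v}).card < Fintype.card V := by
    have h1 : (B1 ∪ B2).card + 1 ≤ B1.card + B2.card := by
      have := Finset.card_union_add_card_inter B1 B2
      have hint : 1 ≤ (B1 ∩ B2).card :=
        card_pos.mpr ⟨u, mem_inter.mpr ⟨huB1, huB2⟩⟩
      omega
    have h2 : (B1 ∪ B2 ∪ {v}).card ≤ (B1 ∪ B2).card + 1 := by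
      simpa using card_union_le (B1 ∪ B2) {v}
    have h3 : (B1 ∪ B2 ∪ {v}).card ≤ 2 * (X.maxDegree * Y.maxDegree) := by omega
    have h4 : 2 * (X.maxDegree * Y.maxDegree) < n := by rw [← Nat.mul_assoc]; exact h
    omega
  obtain ⟨w, hw⟩ : ∃ w, w ∉ B1 ∪ B2 ∪ {v} := by
    by_contra hc
    push_neg at hc
    have : B1 ∪ B2 ∪ {v} = univ := eq_univ_iff_forall.mpr hc
    rw [this, card_univ] at hcard
    omega
  simp only [mem_union, mem_singleton, not_or] at hw
  obtain ⟨⟨hwB1, hwB2⟩, hwv⟩ := hw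
  have hw1 : ∀ x, X.Adj u x → ¬ Y.Adj (σ x) (σ w) := by
    intro x hx hy
    exact hwB1 (by simp only [hB1, mem_filter, mem_univ, true_and]; exact ⟨x, hx, hy⟩)
  have hw2 : ∀ x, X.Adj w x → ¬ Y.Adj (σ u) (σ x) := by
    intro x hx hy
    exact hwB2 (by simp only [hB2, mem_filter, mem_univ, true_and]; exact ⟨x, hx, hy⟩)
  have hwu : w ≠ u := by
    rintro rfl
    exact hw1 v hXuv hYuv.symm
  set τ : V ≃ W := (Equiv.swap u w).trans σ with hτ
  have hτu : τ u = σ w := by simp [hτ, Equiv.swap_apply_left]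
  have hτw : τ w = σ u := by simp [hτ, Equiv.swap_apply_right]
  have hτo : ∀ c, c ≠ u → c ≠ w → τ c = σ c := by
    intro c h1 h2
    simp [hτ, Equiv.swap_apply_of_ne_of_ne h1 h2]
  -- conflicts strictly decrease
  have hsub : P τ ⊂ P σ := by
    constructor
    · intro p hp
      simp only [hP, mem_filter, mem_univ, true_and] at hp ⊢
      obtain ⟨hXp, hYp⟩ := hp
      refine ⟨hXp, ?_⟩
      obtain ⟨a, b⟩ := p
      by_cases hau : a = u
      · rw [hau] at hYp hXp ⊢
        by_cases hbw : b = w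
        · rw [hbw] at hYp hXp ⊢
          rw [hτu, hτw] at hYp
          exact hYp.symm
        · have hbu : b ≠ u := fun hb => (hXp.ne hb.symm).elim
          rw [hτu, hτo b hbu hbw] at hYp
          exact absurd hYp.symm (hw1 b hXp)
      · by_cases haw : a = w
        · rw [haw] at hYp hXp ⊢
          by_cases hbu : b = u
          · rw [hbu] at hYp hXp ⊢
            rw [hτw, hτu] at hYp
            exact hYp.symm
          · have hbw : b ≠ w := fun hb => (hXp.ne hb.symm).elim
            rw [hτw, hτo b hbu hbw] at hYp
            exact absurd hYp (hw2 b hXp)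
        · -- a ∉ {u, w}
          by_cases hbu : b = u
          · rw [hbu] at hYp hXp ⊢
            rw [hτo a hau haw, hτu] at hYp
            exact absurd hYp (hw1 a hXp.symm)
          · by_cases hbw : b = w
            · rw [hbw] at hYp hXp ⊢
              rw [hτo a hau haw, hτw] at hYp
              exact absurd hYp.symm (hw2 a hXp.symm)
            · rwa [hτo a hau haw, hτo b hbu hbw] at hYp
    · intro hcon
      have huv : (u, v) ∈ P σ := by
        simp only [hP, mem_filter, mem_univ, true_and]
        exact ⟨hXuv, hYuv⟩
      have := hcon huv
      simp only [hP, mem_filter, mem_univ, true_and] at this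
      have hvu : v ≠ u := fun hv => (hXuv.ne hv.symm).elim
      have hvw : v ≠ w := fun hv => hwv hv.symm
      rw [hτu, hτo v hvu hvw] at this
      exact hw1 v hXuv this.2.symm
  exact absurd (hσ τ) (Nat.not_le.mpr (card_lt_card hsub))

theorem fs_disconnected_of_small_degrees {V W : Type*} [Fintype V] [Fintype W]
    (n : ℕ) (hV : Fintype.card V = n) (hW : Fintype.card W = n) (hn : 2 ≤ n)
    (X : SimpleGraph V) (Y : SimpleGraph W)
    [DecidableRel X.Adj] [DecidableRel Y.Adj]
    (hedge : ∃ a b : V, X.Adj a b)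
    (h : 2 * X.maxDegree * Y.maxDegree < n) :
    ¬ (FS X Y).Connected := by
  classical
  intro hconn
  obtain ⟨σ, hσ⟩ := exists_packing n hV hW X Y h
  obtain ⟨a, b, hab⟩ := hedge
  set σ' : V ≃ W := σ.trans (Equiv.swap (σ a) (σ b)) with hσ'
  have hne : σ ≠ σ' := by
    intro heq
    have h1 : σ a = σ' a := by rw [← heq]
    have h2 : σ' a = σ b := by
      simp [hσ', Equiv.trans_apply, Equiv.swap_apply_left]
    have : a = b := σ.injective (h1.trans h2)
    exact hab.ne this
  have key : ∀ τ : V ≃ W, (FS X Y).Walk σ τ → σ = τ := by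
    intro τ p
    cases p with
    | nil => rfl
    | cons hadj _ =>
      obtain ⟨x, y, hX, hY, -⟩ := hadj
      exact absurd hY (hσ x y hX)
  obtain ⟨p⟩ := hconn.preconnected σ σ'
  exact hne (key σ' p)
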